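/- There exists a constant c > 0 such that for all odd positive integers n, |Φ(n) − 2^n| ≤ c·n·2^{n/3}. -/
import Mathlib


/-- `Phi n` is the number of nonempty subsets `A` of `{1,2,...,n}` such that
`gcd(A)` is relatively prime to `n`. -/
def Phi (n : ℕ) : ℕ :=
  ((Finset.Icc 1 n).powerset.filter
    (fun A => A.Nonempty ∧ Nat.gcd (A.gcd id) n = 1)).card

theorem Phi_asymptotic_odd :
    ∃ c : ℝ, 0 < c ∧ ∀ n : ℕ, 0 < n → Odd n →
      |(Phi n : ℝ) - 2 ^ n| ≤ c * n * (2 : ℝ) ^ ((n : ℝ) / 3) := by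
  refine ⟨2, two_pos, fun n hn hodd => ?_⟩
  classical
  set S := Finset.Icc 1 n with hS
  set bad := S.powerset.filter (fun A => A.Nonempty ∧ ¬ Nat.gcd (A.gcd id) n = 1)
    with hbad
  -- counting identity
  have hcardS : S.card = n := by simp [hS]
  have h1 : (S.powerset.filter (fun A => A.Nonempty)).card = 2 ^ n - 1 := by
    have : S.powerset.filter (fun A => A.Nonempty) = S.powerset.erase ∅ := by
      ext A
      simp [Finset.mem_erase, Finset.nonempty_iff_ne_empty, and_comm]
    rw [this, Finset.card_erase_of_mem (by simp), Finset.card_powerset, hcardS]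
  have hsum : Phi n + bad.card = 2 ^ n - 1 := by
    rw [← h1, hbad, Phi, ← Finset.filter_filter, ← Finset.filter_filter]
    exact Finset.card_filter_add_card_filter_not _
  -- bound on bad
  have hsub : bad ⊆ n.primeFactors.biUnion
      (fun p => (S.filter (fun x => p ∣ x)).powerset) := by
    intro A hA
    rw [hbad, Finset.mem_filter] at hA
    obtain ⟨hAS, hAne, hg⟩ := hA
    obtain ⟨p, hp, hpd⟩ := Nat.exists_prime_and_dvd hg
    rw [Finset.mem_biUnion]
    refine ⟨p, Nat.mem_primeFactors.2 ⟨hp, hpd.trans (Nat.gcd_dvd_right _ _), hn.ne'⟩, ?_⟩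
    rw [Finset.mem_powerset]
    intro x hx
    rw [Finset.mem_filter]
    exact ⟨Finset.mem_powerset.1 hAS hx,
      (hpd.trans (Nat.gcd_dvd_left _ _)).trans (Finset.gcd_dvd hx)⟩
  have hbadle : bad.card ≤ n * 2 ^ (n / 3) := by
    calc bad.card ≤ ∑ p ∈ n.primeFactors, (S.filter (fun x => p ∣ x)).powerset.card :=
          (Finset.card_le_card hsub).trans Finset.card_biUnion_le
      _ ≤ ∑ _p ∈ n.primeFactors, 2 ^ (n / 3) := by
          refine Finset.sum_le_sum fun p hp => ?_
          have hSIoc : S = Finset.Ioc 0 n := by rw [hS]; rfl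
          rw [Finset.card_powerset, hSIoc, Nat.Ioc_filter_dvd_card_eq_div]
          refine Nat.pow_le_pow_right (by norm_num) (Nat.div_le_div_left ?_ (by norm_num))
          have hpp := Nat.prime_of_mem_primeFactors hp
          have hpodd : Odd p := hodd.of_dvd_nat (Nat.dvd_of_mem_primeFactors hp)
          rcases hpp.eq_two_or_odd' with h2 | _
          · subst h2; exact absurd hpodd (by decide)
          · obtain ⟨k, hk⟩ := hpodd
            have h2 := hpp.two_le
            omega
      _ ≤ n * 2 ^ (n / 3) := by
          rw [Finset.sum_const, smul_eq_mul]
          refine Nat.mul_le_mul_right _ ?_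
          have hsub2 : n.primeFactors ⊆ Finset.Icc 1 n := fun p hp =>
            Finset.mem_Icc.2 ⟨(Nat.prime_of_mem_primeFactors hp).one_lt.le,
              Nat.le_of_dvd hn (Nat.dvd_of_mem_primeFactors hp)⟩
          calc n.primeFactors.card ≤ (Finset.Icc 1 n).card := Finset.card_le_card hsub2
            _ = n := by simp
  -- pass to the reals
  have hone : (1:ℕ) ≤ 2 ^ n := Nat.one_le_two_pow
  have hPhiR : (Phi n : ℝ) = 2 ^ n - 1 - bad.card := by
    have := congrArg (Nat.cast : ℕ → ℝ) hsum
    push_cast [Nat.cast_sub hone] at this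
    linarith
  have habs : |(Phi n : ℝ) - 2 ^ n| = 1 + bad.card := by
    have h : (Phi n : ℝ) - 2 ^ n = -(1 + bad.card) := by rw [hPhiR]; ring
    rw [h, abs_neg, abs_of_nonneg (by positivity)]
  rw [habs]
  have hbadR : (bad.card : ℝ) ≤ n * 2 ^ (n / 3 : ℕ) := by
    exact_mod_cast (Nat.cast_le (α := ℝ)).2 hbadle
  have hpow : (2 : ℝ) ^ (n / 3 : ℕ) ≤ (2 : ℝ) ^ ((n : ℝ) / 3) := by
    rw [← Real.rpow_natCast 2 (n / 3)]
    exact Real.rpow_le_rpow_of_exponent_le one_le_two (Nat.cast_div_le)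
  have hpow1 : (1 : ℝ) ≤ (2 : ℝ) ^ ((n : ℝ) / 3) :=
    Real.one_le_rpow one_le_two (by positivity)
  have hn1 : (1 : ℝ) ≤ n := by exact_mod_cast hn
  have h2 : (n : ℝ) * (2 : ℝ) ^ (n / 3 : ℕ) ≤ n * (2 : ℝ) ^ ((n : ℝ) / 3) :=
    mul_le_mul_of_nonneg_left hpow (by positivity)
  nlinarith [hpow1, hn1, h2, hbadR]
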